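/- Define, for ε ∈ ℝ, the function y_ε : ℝ → ℝ by y_ε(x) = sin x + cos x + ε (16 − sin 2x)/3. Then there exists a constant C > 0 such that for all ε ∈ [0, 1] and all x ∈ ℝ: | y_ε⁗(x) + y_ε''(x) − ε ( 2 y_ε(x) y_ε''(x) + 2 y_ε'(x)² ) | ≤ C ε². -/

import Mathlib

/-- The approximate solution `y_ε(x) = sin x + cos x + ε (16 − sin 2x)/3` of the
perturbed Boussinesq ODE. -/
noncomputable def yApprox (ε : ℝ) : ℝ → ℝ :=
  fun x => Real.sin x + Real.cos x + ε * (16 - Real.sin (2 * x)) / 3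

private lemma hasDerivAt_sin2 (x : ℝ) :
    HasDerivAt (fun x : ℝ => Real.sin (2 * x)) (Real.cos (2 * x) * 2) x := by
  have h1 : HasDerivAt (fun x : ℝ => 2 * x) 2 x := by
    simpa using (hasDerivAt_id x).const_mul 2
  exact (Real.hasDerivAt_sin (2 * x)).comp x h1

private lemma hasDerivAt_cos2 (x : ℝ) :
    HasDerivAt (fun x : ℝ => Real.cos (2 * x)) (-Real.sin (2 * x) * 2) x := by
  have h1 : HasDerivAt (fun x : ℝ => 2 * x) 2 x := by
    simpa using (hasDerivAt_id x).const_mul 2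
  exact (Real.hasDerivAt_cos (2 * x)).comp x h1

private lemma d0 (ε x : ℝ) :
    HasDerivAt (yApprox ε)
      (Real.cos x - Real.sin x - ε * (2 * Real.cos (2 * x)) / 3) x := by
  have h := ((((Real.hasDerivAt_sin x).add (Real.hasDerivAt_cos x)).add
    ((((hasDerivAt_const x (16:ℝ)).sub (hasDerivAt_sin2 x)).const_mul ε).div_const 3)))
  unfold yApprox
  exact h.congr_deriv (by ring)

private lemma d1 (ε x : ℝ) :
    HasDerivAt (fun x => Real.cos x - Real.sin x - ε * (2 * Real.cos (2 * x)) / 3)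
      (-Real.sin x - Real.cos x + ε * (4 * Real.sin (2 * x)) / 3) x := by
  have h := (((Real.hasDerivAt_cos x).sub (Real.hasDerivAt_sin x)).sub
    (((hasDerivAt_cos2 x).const_mul (2:ℝ)).const_mul ε |>.div_const 3))
  exact h.congr_deriv (by ring)

private lemma d2 (ε x : ℝ) :
    HasDerivAt (fun x => -Real.sin x - Real.cos x + ε * (4 * Real.sin (2 * x)) / 3)
      (-Real.cos x + Real.sin x + ε * (8 * Real.cos (2 * x)) / 3) x := by
  have h := ((((Real.hasDerivAt_sin x).neg).sub (Real.hasDerivAt_cos x)).add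
    (((hasDerivAt_sin2 x).const_mul (4:ℝ)).const_mul ε |>.div_const 3))
  exact h.congr_deriv (by ring)

private lemma d3 (ε x : ℝ) :
    HasDerivAt (fun x => -Real.cos x + Real.sin x + ε * (8 * Real.cos (2 * x)) / 3)
      (Real.sin x + Real.cos x - ε * (16 * Real.sin (2 * x)) / 3) x := by
  have h := ((((Real.hasDerivAt_cos x).neg).add (Real.hasDerivAt_sin x)).add
    (((hasDerivAt_cos2 x).const_mul (8:ℝ)).const_mul ε |>.div_const 3))
  exact h.congr_deriv (by ring)

private lemma deriv1 (ε : ℝ) :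
    deriv (yApprox ε) = fun x => Real.cos x - Real.sin x - ε * (2 * Real.cos (2 * x)) / 3 :=
  funext fun x => (d0 ε x).deriv

private lemma deriv2 (ε : ℝ) :
    iteratedDeriv 2 (yApprox ε)
      = fun x => -Real.sin x - Real.cos x + ε * (4 * Real.sin (2 * x)) / 3 := by
  conv_lhs => rw [show (2:ℕ) = 1 + 1 from rfl, iteratedDeriv_succ, iteratedDeriv_one, deriv1]
  exact funext fun x => (d1 ε x).deriv

private lemma deriv4 (ε : ℝ) :
    iteratedDeriv 4 (yApprox ε)
      = fun x => Real.sin x + Real.cos x - ε * (16 * Real.sin (2 * x)) / 3 := by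
  conv_lhs => rw [show (4:ℕ) = 3 + 1 from rfl, iteratedDeriv_succ,
      show (3:ℕ) = 2 + 1 from rfl, iteratedDeriv_succ, deriv2]
  rw [funext fun x => (d2 ε x).deriv]
  exact funext fun x => (d3 ε x).deriv

/-- The function `y_ε` solves the perturbed Boussinesq ODE
`y⁗ + y'' − ε(2yy'' + 2(y')²) = 0` up to a residual that is uniformly `O(ε²)`. -/
theorem approximate_solution_of_perturbed_boussinesq_ODE :
    ∃ C : ℝ, 0 < C ∧ ∀ ε ∈ Set.Icc (0 : ℝ) 1, ∀ x : ℝ,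
      |iteratedDeriv 4 (yApprox ε) x + iteratedDeriv 2 (yApprox ε) x
        - ε * (2 * yApprox ε x * iteratedDeriv 2 (yApprox ε) x
          + 2 * (deriv (yApprox ε) x) ^ 2)| ≤ C * ε ^ 2 := by
  refine ⟨100, by norm_num, ?_⟩
  rintro ε ⟨hε0, hε1⟩ x
  rw [deriv1, deriv2, deriv4]
  unfold yApprox
  set s := Real.sin x
  set c := Real.cos x
  set t := Real.sin (2 * x)
  set u := Real.cos (2 * x)
  have hst : s * c = t / 2 := by
    have := Real.sin_two_mul x
    simp only [s, c, t] at *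
    linarith
  have hs1 : |s| ≤ 1 := Real.abs_sin_le_one x
  have hc1 : |c| ≤ 1 := Real.abs_cos_le_one x
  have ht1 : |t| ≤ 1 := Real.abs_sin_le_one _
  have hu1 : |u| ≤ 1 := Real.abs_cos_le_one _
  rw [abs_le] at hs1 hc1 ht1 hu1
  have key : (s + c - ε * (16 * t) / 3) + (-s - c + ε * (4 * t) / 3)
      - ε * (2 * (s + c + ε * (16 - t) / 3) * (-s - c + ε * (4 * t) / 3)
        + 2 * (c - s - ε * (2 * u) / 3) ^ 2)
      = ε ^ 2 * (-(2 * (s + c) * (5 * t - 16) / 3 - 8 / 3 * (c - s) * u)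
          - ε * (8 / 9 * ((16 - t) * t + u ^ 2))) := by
    linear_combination (8 * ε) * hst
  rw [key, abs_mul, abs_of_nonneg (sq_nonneg ε), mul_comm]
  apply mul_le_mul_of_nonneg_right _ (sq_nonneg ε)
  rw [abs_le]
  constructor <;> nlinarith [mul_nonneg hε0 hε0, sq_nonneg u, sq_nonneg t,
    mul_le_one₀ hε1 hε0 hε1]
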